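/- Let $N\geq3$, $q>1$, $\lambda,\theta\in\mathbb{R}$ satisfy $\ell=\Theta^2-(N-2)\Theta+\lambda>0$, where $\Theta=(\theta+2)/(q-1)$. Fix a suitable $\alpha>0$ small depending only on $N,q,\theta,\lambda$, and let $\nu>0$. For $\varepsilon\in(0,1)$ there exists $\eta_0>0$ such that for every $\eta\in(0,\eta_0)$ the function $w^+_{\varepsilon,\eta}(x)=(1+\varepsilon)\ell^{1/(q-1)}|x|^{-\Theta}|x|^{-\eta}\left(1+\frac{|x|^\alpha}{\nu}\right)^{1/\sqrt{\alpha}}$ satisfies $-\Delta w^+_{\varepsilon,\eta}-\lambda|x|^{-2}w^+_{\varepsilon,\eta}+|x|^\theta (w^+_{\varepsilon,\eta})^q\geq 0$ in $B_1(0)\setminus\{0\}$. -/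

import Mathlib

open scoped BigOperators
noncomputable def lap {N : ℕ} (u : EuclideanSpace ℝ (Fin N) → ℝ)
    (x : EuclideanSpace ℝ (Fin N)) : ℝ :=
  ∑ i : Fin N, fderiv ℝ (fun y => fderiv ℝ u y (EuclideanSpace.single i 1)) x
    (EuclideanSpace.single i 1)

lemma lap_congr {N : ℕ} {u v : EuclideanSpace ℝ (Fin N) → ℝ} {x : EuclideanSpace ℝ (Fin N)}
    (h : ∀ᶠ y in nhds x, u y = v y) : lap u x = lap v x := by
  unfold lap
  refine Finset.sum_congr rfl fun i _ => ?_
  have h2 : (fun y => fderiv ℝ u y (EuclideanSpace.single i 1)) =ᶠ[nhds x]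
      (fun y => fderiv ℝ v y (EuclideanSpace.single i 1)) := by
    filter_upwards [h.eventually_nhds] with y hy
    rw [Filter.EventuallyEq.fderiv_eq hy]
  rw [Filter.EventuallyEq.fderiv_eq h2]

lemma sum_sq_eq {N : ℕ} (x : EuclideanSpace ℝ (Fin N)) : ∑ i, x i ^ 2 = ‖x‖ ^ 2 := by
  rw [EuclideanSpace.norm_eq, Real.sq_sqrt]
  · simp [sq_abs]
  · positivity

lemma hasFDerivAt_sumsq {N : ℕ} (y : EuclideanSpace ℝ (Fin N)) :
    HasFDerivAt (fun z : EuclideanSpace ℝ (Fin N) => ∑ i, z i ^ 2)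
      (∑ i, (2 * y i) • (EuclideanSpace.proj i : EuclideanSpace ℝ (Fin N) →L[ℝ] ℝ)) y := by
  refine HasFDerivAt.fun_sum fun i _ => ?_
  have h : HasFDerivAt (fun z : EuclideanSpace ℝ (Fin N) => z i)
      (EuclideanSpace.proj i : EuclideanSpace ℝ (Fin N) →L[ℝ] ℝ) y :=
    (EuclideanSpace.proj i : EuclideanSpace ℝ (Fin N) →L[ℝ] ℝ).hasFDerivAt
  have := h.fun_mul h
  simpa [sq, two_mul, add_smul] using this

lemma proj_single {N : ℕ} (i j : Fin N) :
    (EuclideanSpace.single i (1:ℝ)) j = if j = i then 1 else 0 := by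
  simp [EuclideanSpace.single_apply]

lemma Lmap_apply {N : ℕ} (y : EuclideanSpace ℝ (Fin N)) (i : Fin N) :
    (∑ j, (2 * y j) • (EuclideanSpace.proj j : EuclideanSpace ℝ (Fin N) →L[ℝ] ℝ))
      (EuclideanSpace.single i 1) = 2 * y i := by
  rw [ContinuousLinearMap.sum_apply]
  rw [Finset.sum_eq_single i]
  · simp
  · intro j _ hj
    simp [EuclideanSpace.single_apply, hj]
  · simp

lemma lap_radial {N : ℕ} (f f₁ f₂ : ℝ → ℝ)
    (h1 : ∀ s : ℝ, 0 < s → HasDerivAt f (f₁ s) s)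
    (h2 : ∀ s : ℝ, 0 < s → HasDerivAt f₁ (f₂ s) s)
    (x : EuclideanSpace ℝ (Fin N)) (hx : 0 < ‖x‖) :
    lap (fun y => f (‖y‖ ^ 2)) x
      = 4 * ‖x‖ ^ 2 * f₂ (‖x‖ ^ 2) + 2 * N * f₁ (‖x‖ ^ 2) := by
  set S : EuclideanSpace ℝ (Fin N) → ℝ := fun y => ∑ i, y i ^ 2 with hS
  set L : EuclideanSpace ℝ (Fin N) → (EuclideanSpace ℝ (Fin N) →L[ℝ] ℝ) :=
    fun y => ∑ j, (2 * y j) • (EuclideanSpace.proj j : EuclideanSpace ℝ (Fin N) →L[ℝ] ℝ)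
    with hL
  have hSnorm : ∀ y : EuclideanSpace ℝ (Fin N), S y = ‖y‖ ^ 2 := fun y => sum_sq_eq y
  have hSx : 0 < S x := by rw [hSnorm]; positivity
  -- u = f ∘ S
  have hueq : (fun y : EuclideanSpace ℝ (Fin N) => f (‖y‖ ^ 2)) = fun y => f (S y) := by
    funext y; rw [hSnorm]
  rw [hueq]
  have hopen : IsOpen {y : EuclideanSpace ℝ (Fin N) | 0 < S y} := by
    have : Continuous S := by
      apply continuous_finset_sum
      intro i _
      exact ((EuclideanSpace.proj i : EuclideanSpace ℝ (Fin N) →L[ℝ] ℝ).continuous).pow 2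
    exact isOpen_lt continuous_const this
  have hmem : {y : EuclideanSpace ℝ (Fin N) | 0 < S y} ∈ nhds x :=
    hopen.mem_nhds hSx
  -- first derivative on nbhd
  have hfd : ∀ y : EuclideanSpace ℝ (Fin N), 0 < S y →
      HasFDerivAt (fun z => f (S z)) (f₁ (S y) • L y) y := by
    intro y hy
    exact (h1 (S y) hy).comp_hasFDerivAt y (hasFDerivAt_sumsq y)
  unfold lap
  have key : ∀ i : Fin N,
      fderiv ℝ (fun y => fderiv ℝ (fun z => f (S z)) y (EuclideanSpace.single i 1)) x
        (EuclideanSpace.single i 1) = 4 * (x i)^2 * f₂ (S x) + 2 * f₁ (S x) := by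
    intro i
    have hev : (fun y => fderiv ℝ (fun z => f (S z)) y (EuclideanSpace.single i 1))
        =ᶠ[nhds x] (fun y => f₁ (S y) * (2 * y i)) := by
      filter_upwards [hmem] with y hy
      rw [(hfd y hy).fderiv]
      simp only [ContinuousLinearMap.coe_smul', Pi.smul_apply, smul_eq_mul]
      rw [Lmap_apply]
    rw [Filter.EventuallyEq.fderiv_eq hev]
    -- derivative of y ↦ f₁ (S y) * (2 * y i) at x
    have hc : HasFDerivAt (fun y => f₁ (S y)) (f₂ (S x) • L x) x :=
      (h2 (S x) hSx).comp_hasFDerivAt x (hasFDerivAt_sumsq x)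
    have hd : HasFDerivAt (fun y : EuclideanSpace ℝ (Fin N) => 2 * y i)
        ((2:ℝ) • (EuclideanSpace.proj i : EuclideanSpace ℝ (Fin N) →L[ℝ] ℝ)) x := by
      have h := (EuclideanSpace.proj i : EuclideanSpace ℝ (Fin N) →L[ℝ] ℝ).hasFDerivAt (x := x)
      exact h.const_mul 2
    have hprod := hc.fun_mul hd
    rw [hprod.fderiv]
    simp only [ContinuousLinearMap.add_apply, ContinuousLinearMap.coe_smul', Pi.smul_apply,
      smul_eq_mul]
    rw [Lmap_apply]
    simp [EuclideanSpace.single_apply]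
    ring
  rw [Finset.sum_congr rfl (fun i _ => key i)]
  rw [Finset.sum_add_distrib, Finset.sum_const, Finset.card_univ, Fintype.card_fin,
    ← Finset.sum_mul]
  have hsum : (∑ i, 4 * (x i) ^ 2) = 4 * ‖x‖ ^ 2 := by
    rw [← Finset.mul_sum, sum_sq_eq]
  rw [hsum, hSnorm x, nsmul_eq_mul]
  ring

section deriv1
variable (C p γ m ν : ℝ)

lemma hasDerivAt_f (hν : 0 < ν) (s : ℝ) (hs : 0 < s) :
    HasDerivAt (fun s : ℝ => C * s ^ p * (1 + s ^ γ / ν) ^ m)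
      (C * s ^ (p-1) * (1 + s ^ γ / ν) ^ (m-1) * (p * (1 + s ^ γ / ν) + m * γ * (s ^ γ / ν)))
      s := by
  have hs0 : s ≠ 0 := ne_of_gt hs
  have hG : 0 < 1 + s ^ γ / ν := by positivity
  have h1 : HasDerivAt (fun s : ℝ => s ^ p) (p * s ^ (p - 1)) s :=
    Real.hasDerivAt_rpow_const (Or.inl hs0)
  have hT : HasDerivAt (fun s : ℝ => 1 + s ^ γ / ν) (γ * s ^ (γ - 1) / ν) s :=
    (((Real.hasDerivAt_rpow_const (Or.inl hs0)) :
      HasDerivAt (fun s : ℝ => s ^ γ) (γ * s ^ (γ - 1)) s).div_const ν).const_add 1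
  have hGm : HasDerivAt (fun s : ℝ => (1 + s ^ γ / ν) ^ m)
      ((γ * s ^ (γ - 1) / ν) * m * (1 + s ^ γ / ν) ^ (m - 1)) s :=
    hT.rpow_const (Or.inl (ne_of_gt hG))
  have hmain := (h1.const_mul C).fun_mul hGm
  refine hmain.congr_deriv ?_
  have e1 : s ^ p = s ^ (p - 1) * s := by
    rw [← Real.rpow_add_one hs0]; ring_nf
  have e2 : s ^ γ = s ^ (γ - 1) * s := by
    rw [← Real.rpow_add_one hs0]; ring_nf
  have e3 : (1 + s ^ γ / ν) ^ m = (1 + s ^ γ / ν) ^ (m - 1) * (1 + s ^ γ / ν) := by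
    rw [← Real.rpow_add_one (ne_of_gt hG)]; ring_nf
  rw [e3, e2]
  rw [e1]
  ring

lemma hasDerivAt_f1 (hν : 0 < ν) (s : ℝ) (hs : 0 < s) :
    HasDerivAt (fun s : ℝ => C * s ^ (p-1) * (1 + s ^ γ / ν) ^ (m-1)
        * (p * (1 + s ^ γ / ν) + m * γ * (s ^ γ / ν)))
      (C * s ^ (p-2) * (1 + s ^ γ / ν) ^ (m-2) *
        (p * (p-1) * (1 + s ^ γ / ν) ^ 2
          + m * γ * (s ^ γ / ν) * (1 + s ^ γ / ν) * (2*p + γ - 1)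
          + m * (m-1) * γ ^ 2 * (s ^ γ / ν) ^ 2)) s := by
  have hs0 : s ≠ 0 := ne_of_gt hs
  have hG : 0 < 1 + s ^ γ / ν := by positivity
  have h1 : HasDerivAt (fun s : ℝ => s ^ (p-1)) ((p-1) * s ^ (p - 2)) s := by
    have := Real.hasDerivAt_rpow_const (x := s) (p := p - 1) (Or.inl hs0)
    convert this using 2; ring
  have hT : HasDerivAt (fun s : ℝ => 1 + s ^ γ / ν) (γ * s ^ (γ - 1) / ν) s :=
    (((Real.hasDerivAt_rpow_const (Or.inl hs0)) :
      HasDerivAt (fun s : ℝ => s ^ γ) (γ * s ^ (γ - 1)) s).div_const ν).const_add 1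
  have hT0 : HasDerivAt (fun s : ℝ => s ^ γ / ν) (γ * s ^ (γ - 1) / ν) s :=
    ((Real.hasDerivAt_rpow_const (Or.inl hs0)) :
      HasDerivAt (fun s : ℝ => s ^ γ) (γ * s ^ (γ - 1)) s).div_const ν
  have hGm : HasDerivAt (fun s : ℝ => (1 + s ^ γ / ν) ^ (m-1))
      ((γ * s ^ (γ - 1) / ν) * (m-1) * (1 + s ^ γ / ν) ^ (m - 2)) s := by
    have := hT.rpow_const (p := m - 1) (Or.inl (ne_of_gt hG))
    convert this using 2; ring
  have hP : HasDerivAt (fun s : ℝ => p * (1 + s ^ γ / ν) + m * γ * (s ^ γ / ν))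
      (p * (γ * s ^ (γ - 1) / ν) + m * γ * (γ * s ^ (γ - 1) / ν)) s :=
    (hT.const_mul p).add (hT0.const_mul (m * γ))
  have hmain := ((h1.const_mul C).fun_mul hGm).fun_mul hP
  refine hmain.congr_deriv ?_
  have e1 : s ^ (p-1) = s ^ (p - 2) * s := by
    rw [← Real.rpow_add_one hs0]; ring_nf
  have e2 : s ^ γ = s ^ (γ - 1) * s := by
    rw [← Real.rpow_add_one hs0]; ring_nf
  have e3 : (1 + s ^ γ / ν) ^ (m-1) = (1 + s ^ γ / ν) ^ (m - 2) * (1 + s ^ γ / ν) := by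
    rw [← Real.rpow_add_one (ne_of_gt hG)]; ring_nf
  rw [e3, e2, e1]
  field_simp
  ring

lemma polykey (ℓ gε a C₁ K₁ T M B X : ℝ) (hT : 0 < T)
    (ha0 : 0 < a) (ha1 : a ≤ 1) (hKb : K₁ ≤ C₁)
    (hX : X ≤ gε) (hgε : 0 < gε) (hℓ : 0 < ℓ) (hC₁ : 0 < C₁)
    (hs2 : a*(C₁+1) ≤ ℓ*M) (hM1 : 1 ≤ M) (hBer : 1 + M*T ≤ B) :
    (ℓ + X)*(1+T)^2 + a*K₁*(T*(1+T)) + (a*a - a*a*a)*T^2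
      ≤ (ℓ + gε)*(B*(1+T)^2) := by
  have hG0 : (0:ℝ) < 1+T := by linarith
  have hTG : 0 < T*(1+T) := mul_pos hT hG0
  have hTG2 : 0 < T*(1+T)^2 := mul_pos hT (pow_pos hG0 2)
  have h1a : a*K₁*(T*(1+T)) ≤ a*C₁*(T*(1+T)) :=
    mul_le_mul_of_nonneg_right (mul_le_mul_of_nonneg_left hKb ha0.le) hTG.le
  have h1 : a*K₁*(T*(1+T)) ≤ a*C₁*(T*(1+T)^2) := by
    nlinarith [mul_pos ha0 hC₁, mul_pos (mul_pos hT hT) hG0]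
  have ha2 : a*a - a*a*a ≤ a := by nlinarith
  have hT2 : T^2 ≤ T*(1+T)^2 := by nlinarith
  have h2 : (a*a - a*a*a)*T^2 ≤ a*(T*(1+T)^2) :=
    calc (a*a - a*a*a)*T^2 ≤ a*T^2 := mul_le_mul_of_nonneg_right ha2 (sq_nonneg T)
    _ ≤ a*(T*(1+T)^2) := mul_le_mul_of_nonneg_left hT2 ha0.le
  have h3 : X*(1+T)^2 ≤ gε*(1+T)^2 := by nlinarith [sq_nonneg (1+T)]
  have h4 : a*(C₁+1)*(T*(1+T)^2) ≤ ℓ*M*(T*(1+T)^2) :=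
    mul_le_mul_of_nonneg_right hs2 hTG2.le
  have h5 : gε*(1+T)^2 ≤ gε*((1+M*T)*(1+T)^2) := by
    nlinarith [mul_nonneg (mul_nonneg hgε.le (mul_nonneg (by linarith : (0:ℝ) ≤ M) hT.le))
      (sq_nonneg (1+T))]
  have h5b : ℓ*(1+T)^2 + ℓ*M*(T*(1+T)^2) = ℓ*((1+M*T)*(1+T)^2) := by ring
  have h6 : (ℓ+gε)*((1+M*T)*(1+T)^2) ≤ (ℓ+gε)*(B*(1+T)^2) := by
    have h7 : (1+M*T)*(1+T)^2 ≤ B*(1+T)^2 :=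
      mul_le_mul_of_nonneg_right hBer (by positivity)
    exact mul_le_mul_of_nonneg_left h7 (by linarith)
  linarith [h1, h2, h3, h4, h5, h5b, h6]

set_option maxHeartbeats 2000000 in
theorem stmt_14 (N : ℕ) (hN : 3 ≤ N) (q θ lam : ℝ) (hq : 1 < q)
    (Θ ℓ : ℝ) (hΘ : Θ = (θ + 2) / (q - 1))
    (hℓ : ℓ = Θ ^ 2 - ((N : ℝ) - 2) * Θ + lam) (hℓpos : 0 < ℓ) :
    ∃ α : ℝ, 0 < α ∧ ∀ ν : ℝ, 0 < ν → ∀ ε ∈ Set.Ioo (0 : ℝ) 1,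
      ∃ η₀ : ℝ, 0 < η₀ ∧ ∀ η ∈ Set.Ioo (0 : ℝ) η₀,
        ∀ x : EuclideanSpace ℝ (Fin N), 0 < ‖x‖ → ‖x‖ < 1 →
          0 ≤ -lap (fun y => (1 + ε) * ℓ ^ (1 / (q - 1)) * ‖y‖ ^ (-Θ) * ‖y‖ ^ (-η)
                * (1 + ‖y‖ ^ α / ν) ^ (1 / Real.sqrt α)) x
            - lam / ‖x‖ ^ 2 * ((1 + ε) * ℓ ^ (1 / (q - 1)) * ‖x‖ ^ (-Θ) * ‖x‖ ^ (-η)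
                * (1 + ‖x‖ ^ α / ν) ^ (1 / Real.sqrt α))
            + ‖x‖ ^ θ * ((1 + ε) * ℓ ^ (1 / (q - 1)) * ‖x‖ ^ (-Θ) * ‖x‖ ^ (-η)
                * (1 + ‖x‖ ^ α / ν) ^ (1 / Real.sqrt α)) ^ q := by
  have hq1 : (0:ℝ) < q - 1 := by linarith
  -- constants
  set D : ℝ := 2 * |Θ| + 1 + N with hD
  set C₁ : ℝ := (N : ℝ) + 2 * |Θ| + 5 with hC₁
  have hDpos : 0 < D := by positivity
  have hC₁pos : 0 < C₁ := by positivity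
  refine ⟨min 1 (min ((q-1)^2) (ℓ*(q-1)/(C₁+1))), by positivity, ?_⟩
  set α : ℝ := min 1 (min ((q-1)^2) (ℓ*(q-1)/(C₁+1))) with hα
  have hα0 : 0 < α := by positivity
  have hα1 : α ≤ 1 := min_le_left _ _
  set a : ℝ := Real.sqrt α with ha
  have ha0 : 0 < a := Real.sqrt_pos.mpr hα0
  have haa : a * a = α := Real.mul_self_sqrt hα0.le
  have ha1 : a ≤ 1 := by
    rw [ha, show (1:ℝ) = Real.sqrt 1 by simp]
    exact Real.sqrt_le_sqrt hα1
  have haq : a ≤ q - 1 := by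
    have : α ≤ (q-1)^2 := le_trans (min_le_right _ _) (min_le_left _ _)
    calc a = Real.sqrt α := rfl
    _ ≤ Real.sqrt ((q-1)^2) := Real.sqrt_le_sqrt this
    _ = q - 1 := by rw [Real.sqrt_sq hq1.le]
  have haC : a * a * (C₁ + 1) ≤ ℓ * (q - 1) := by
    have h1 : α ≤ ℓ*(q-1)/(C₁+1) := le_trans (min_le_right _ _) (min_le_right _ _)
    rw [haa]
    rw [le_div_iff₀ (by positivity)] at h1
    linarith
  intro ν hν ε hε
  obtain ⟨hε0, hε1⟩ := hε
  set gε : ℝ := ℓ * ((1 + ε) ^ (q-1) - 1) with hgε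
  have hrpow1 : (1:ℝ) < (1 + ε) ^ (q-1) := by
    exact (Real.one_lt_rpow_iff_of_pos (by linarith)).mpr (Or.inl ⟨by linarith, hq1⟩)
  have hgε0 : 0 < gε := by
    apply mul_pos hℓpos; linarith
  refine ⟨min 1 (gε / D), by positivity, ?_⟩
  intro η hη x hr0 hr1
  obtain ⟨hη0, hη1⟩ := hη
  have hη1' : η ≤ 1 := le_trans hη1.le (min_le_left _ _)
  have hηD : η * D ≤ gε := by
    have h1 : η ≤ gε / D := le_trans hη1.le (min_le_right _ _)
    rw [le_div_iff₀ hDpos] at h1; linarith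
  -- abbreviations
  set Cc : ℝ := (1 + ε) * ℓ ^ (1 / (q - 1)) with hCc
  have hCc0 : 0 < Cc := by
    apply mul_pos (by linarith)
    exact Real.rpow_pos_of_pos hℓpos _
  set p : ℝ := (-Θ - η) / 2 with hp
  set γ : ℝ := α / 2 with hγ
  set m : ℝ := 1 / a with hm
  have hm0 : 0 < m := by positivity
  have hma : m * a = 1 := by rw [hm]; field_simp
  set s : ℝ := ‖x‖ ^ 2 with hs
  have hs0 : 0 < s := by positivity
  have hs1 : s < 1 := by
    rw [hs]; nlinarith
  set T : ℝ := s ^ γ / ν with hT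
  have hT0 : 0 < T := by
    apply div_pos (Real.rpow_pos_of_pos hs0 _) hν
  set G : ℝ := 1 + T with hG
  have hG1 : 1 ≤ G := by rw [hG]; linarith
  have hG0 : 0 < G := by linarith
  -- pointwise identity
  have hpt : ∀ y : EuclideanSpace ℝ (Fin N), 0 < ‖y‖ →
      (1 + ε) * ℓ ^ (1 / (q - 1)) * ‖y‖ ^ (-Θ) * ‖y‖ ^ (-η)
        * (1 + ‖y‖ ^ α / ν) ^ (1 / Real.sqrt α)
      = Cc * (‖y‖^2 : ℝ) ^ p * (1 + (‖y‖^2 : ℝ) ^ γ / ν) ^ m := by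
    intro y hy
    have h2 : ((‖y‖:ℝ)^2) = ‖y‖ ^ ((2:ℕ):ℝ) := (Real.rpow_natCast ‖y‖ 2).symm
    have e1 : ((‖y‖:ℝ)^2) ^ p = ‖y‖ ^ (-Θ) * ‖y‖ ^ (-η) := by
      rw [h2, ← Real.rpow_mul hy.le, ← Real.rpow_add hy]
      congr 1
      push_cast
      rw [hp]; ring
    have e2 : ((‖y‖:ℝ)^2) ^ γ = ‖y‖ ^ α := by
      rw [h2, ← Real.rpow_mul hy.le]
      congr 1
      push_cast
      rw [hγ]; ring
    rw [e1, e2, hCc]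
    ring
  -- laplacian computation
  have hlap : lap (fun y => (1 + ε) * ℓ ^ (1 / (q - 1)) * ‖y‖ ^ (-Θ) * ‖y‖ ^ (-η)
                * (1 + ‖y‖ ^ α / ν) ^ (1 / Real.sqrt α)) x
      = 4 * s * (Cc * s ^ (p-2) * (1 + s ^ γ / ν) ^ (m-2) *
          (p * (p-1) * (1 + s ^ γ / ν) ^ 2
            + m * γ * (s ^ γ / ν) * (1 + s ^ γ / ν) * (2*p + γ - 1)
            + m * (m-1) * γ ^ 2 * (s ^ γ / ν) ^ 2))
        + 2 * N * (Cc * s ^ (p-1) * (1 + s ^ γ / ν) ^ (m-1)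
            * (p * (1 + s ^ γ / ν) + m * γ * (s ^ γ / ν))) := by
    have hev : (fun y : EuclideanSpace ℝ (Fin N) =>
        (1 + ε) * ℓ ^ (1 / (q - 1)) * ‖y‖ ^ (-Θ) * ‖y‖ ^ (-η)
          * (1 + ‖y‖ ^ α / ν) ^ (1 / Real.sqrt α))
        =ᶠ[nhds x] (fun y => Cc * (‖y‖^2 : ℝ) ^ p * (1 + (‖y‖^2 : ℝ) ^ γ / ν) ^ m) := by
      have hopen : IsOpen {y : EuclideanSpace ℝ (Fin N) | 0 < ‖y‖} :=
        isOpen_lt continuous_const continuous_norm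
      filter_upwards [hopen.mem_nhds hr0] with y hy
      exact hpt y hy
    rw [lap_congr hev]
    exact lap_radial (fun s => Cc * s ^ p * (1 + s ^ γ / ν) ^ m)
      (fun s => Cc * s ^ (p-1) * (1 + s ^ γ / ν) ^ (m-1)
          * (p * (1 + s ^ γ / ν) + m * γ * (s ^ γ / ν)))
      (fun s => Cc * s ^ (p-2) * (1 + s ^ γ / ν) ^ (m-2) *
          (p * (p-1) * (1 + s ^ γ / ν) ^ 2
            + m * γ * (s ^ γ / ν) * (1 + s ^ γ / ν) * (2*p + γ - 1)
            + m * (m-1) * γ ^ 2 * (s ^ γ / ν) ^ 2))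
      (fun t ht => hasDerivAt_f Cc p γ m ν hν t ht)
      (fun t ht => hasDerivAt_f1 Cc p γ m ν hν t ht) x hr0
  rw [hlap, hpt x hr0]
  -- now a pure real inequality
  set K₁ : ℝ := (N:ℝ) - 2 - 2*(Θ + η) + α with hK₁
  set Q : ℝ := (ℓ + η*(2*Θ + η - ((N:ℝ)-2))) * G^2 + (m*α) * K₁ * (T*G)
      + (m*(m-1)*α^2) * T^2 with hQ
  -- ID1
  have ID1 : 4 * s * (Cc * s ^ (p-2) * (1 + s ^ γ / ν) ^ (m-2) *
          (p * (p-1) * (1 + s ^ γ / ν) ^ 2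
            + m * γ * (s ^ γ / ν) * (1 + s ^ γ / ν) * (2*p + γ - 1)
            + m * (m-1) * γ ^ 2 * (s ^ γ / ν) ^ 2))
        + 2 * N * (Cc * s ^ (p-1) * (1 + s ^ γ / ν) ^ (m-1)
            * (p * (1 + s ^ γ / ν) + m * γ * (s ^ γ / ν)))
        + lam / ‖x‖^2 * (Cc * s ^ p * (1 + s ^ γ / ν) ^ m)
      = Cc * s ^ (p-1) * G ^ (m-2) * Q := by
    have hGe : (1:ℝ) + s ^ γ / ν = G := by rw [hG, hT]
    have es1 : s ^ (p-1) = s ^ (p-2) * s := by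
      rw [← Real.rpow_add_one hs0.ne']; ring_nf
    have es2 : s ^ p = s ^ (p-1) * s := by
      rw [← Real.rpow_add_one hs0.ne']; ring_nf
    have eg1 : G ^ (m-1) = G ^ (m-2) * G := by
      rw [← Real.rpow_add_one hG0.ne']; ring_nf
    have eg2 : G ^ m = G ^ (m-1) * G := by
      rw [← Real.rpow_add_one hG0.ne']; ring_nf
    rw [hGe, ← hT, hQ, hK₁, eg2, eg1, es2, es1, hℓ, hp, hγ]
    field_simp
    ring
  -- ID2
  have ID2 : ‖x‖ ^ θ * (Cc * s ^ p * (1 + s ^ γ / ν) ^ m) ^ q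
      = Cc ^ q * s ^ (θ/2 + p*q) * G ^ (m*q) := by
    have hGe : (1:ℝ) + s ^ γ / ν = G := by rw [hG, hT]
    rw [hGe]
    rw [Real.mul_rpow (by positivity) (by positivity),
      Real.mul_rpow (le_of_lt hCc0) (by positivity)]
    rw [← Real.rpow_mul hs0.le, ← Real.rpow_mul hG0.le]
    have e0 : ‖x‖ ^ θ = s ^ (θ/2) := by
      rw [hs, ← Real.rpow_natCast ‖x‖ 2, ← Real.rpow_mul (norm_nonneg x)]
      congr 1
      push_cast
      ring
    rw [e0, Real.rpow_add hs0]
    ring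
  -- key inequality
  have key1 : Q ≤ ℓ * (1 + ε) ^ (q-1) * G ^ (m*(q-1)+2) := by
    have hM1 : 1 ≤ m * (q-1) := by
      rw [hm, one_div, inv_mul_eq_div, le_div_iff₀ ha0]
      linarith
    have hBer : 1 + (m*(q-1))*T ≤ (1+T) ^ (m*(q-1)) :=
      one_add_mul_self_le_rpow_one_add (by linarith) hM1
    have hsplit : G ^ (m*(q-1)+2) = G ^ (m*(q-1)) * G^2 := by
      rw [Real.rpow_add hG0]
      congr 1
      rw [← Real.rpow_natCast G 2]
      norm_num
    have hEeq : ℓ * ((1 + ε) ^ (q-1)) = ℓ + gε := by rw [hgε]; ring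
    have hc1 : m * α = a := by rw [hm, ← haa]; field_simp
    have hc2' : m * (m-1) * α^2 = a*a - a*a*a := by
      rw [hm, ← haa]; field_simp
    have hKb : K₁ ≤ C₁ := by
      rw [hK₁, hC₁]
      have h1 := le_abs_self Θ
      have h2 := neg_abs_le Θ
      linarith
    have hηg : η * (2*Θ + η - ((N:ℝ)-2)) ≤ gε := by
      have h1 : 2*Θ + η - ((N:ℝ)-2) ≤ D := by
        rw [hD]
        have h2 := le_abs_self Θ
        have h3 : (3:ℝ) ≤ N := by exact_mod_cast hN
        linarith
      calc η * (2*Θ + η - ((N:ℝ)-2)) ≤ η * D := by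
            apply mul_le_mul_of_nonneg_left h1 hη0.le
      _ ≤ gε := hηD
    have hami : m*(q-1)*a = q - 1 := by rw [hm]; field_simp
    have hs2 : a*(C₁+1) ≤ ℓ*(m*(q-1)) := by
      rw [← mul_le_mul_iff_left₀ ha0]
      calc a*(C₁+1)*a = a*a*(C₁+1) := by ring
        _ ≤ ℓ*(q-1) := haC
        _ = ℓ*(m*(q-1)*a) := by rw [hami]
        _ = ℓ*(m*(q-1))*a := by ring
    calc Q ≤ (ℓ + gε)*(G ^ (m*(q-1)) * G^2) := by
          rw [hQ, hc1, hc2', hG]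
          exact polykey ℓ gε a C₁ K₁ T (m*(q-1)) ((1+T) ^ (m*(q-1)))
            (η*(2*Θ + η - ((N:ℝ)-2)))
            hT0 ha0 ha1 hKb hηg hgε0 hℓpos hC₁pos hs2 hM1 hBer
      _ = ℓ * (1 + ε) ^ (q-1) * G ^ (m*(q-1)+2) := by rw [hsplit, ← hEeq]
  -- final chain
  have chain : Cc * s ^ (p-1) * G ^ (m-2) * Q ≤ Cc ^ q * s ^ (θ/2 + p*q) * G ^ (m*q) := by
    have hGm2 : (0:ℝ) < G ^ (m-2) := Real.rpow_pos_of_pos hG0 _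
    have hsp : (0:ℝ) < s ^ (p-1) := Real.rpow_pos_of_pos hs0 _
    have hCq : Cc ^ q = Cc * (ℓ * (1+ε) ^ (q-1)) := by
      rw [show q = 1 + (q-1) by ring, Real.rpow_add hCc0, Real.rpow_one, hCc]
      rw [Real.mul_rpow (by linarith) (Real.rpow_pos_of_pos hℓpos _).le,
        ← Real.rpow_mul hℓpos.le, one_div_mul_cancel (ne_of_gt hq1), Real.rpow_one]
      ring
    have hGcomb : G ^ (m-2) * G ^ (m*(q-1)+2) = G ^ (m*q) := by
      rw [← Real.rpow_add hG0]
      congr 1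
      ring
    have hexp : θ/2 + p*q ≤ p - 1 := by
      have hΘq : Θ*(q-1) = θ + 2 := by rw [hΘ]; field_simp
      have hpq' : p*q = p + p*(q-1) := by ring
      have hp2 : p*(q-1) = -(Θ*(q-1) + η*(q-1))/2 := by rw [hp]; ring
      have h3 : 0 < η*(q-1) := mul_pos hη0 hq1
      linarith [hpq', hp2, hΘq, h3]
    calc Cc * s ^ (p-1) * G ^ (m-2) * Q
        ≤ Cc * s ^ (p-1) * G ^ (m-2) * (ℓ * (1+ε) ^ (q-1) * G ^ (m*(q-1)+2)) := by
          apply mul_le_mul_of_nonneg_left _ (by positivity)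
          calc Q ≤ ℓ * (1 + ε) ^ (q-1) * G ^ (m*(q-1)+2) := key1
          _ = ℓ * (1+ε) ^ (q-1) * G ^ (m*(q-1)+2) := rfl
      _ = Cc ^ q * s ^ (p-1) * G ^ (m*q) := by
          rw [hCq, ← hGcomb]
          ring
      _ ≤ Cc ^ q * s ^ (θ/2 + p*q) * G ^ (m*q) := by
          have h := Real.rpow_le_rpow_of_exponent_ge hs0 hs1.le hexp
          have hCcq : (0:ℝ) < Cc ^ q := Real.rpow_pos_of_pos hCc0 _
          have hGmq : (0:ℝ) < G ^ (m*q) := Real.rpow_pos_of_pos hG0 _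
          apply mul_le_mul_of_nonneg_right _ hGmq.le
          exact mul_le_mul_of_nonneg_left h hCcq.le
  linarith [ID1, ID2, chain,
    le_of_eq (ID1.symm), -- dummy
    chain]
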